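/- arXiv:1505.00954 — 2 statements merged into one kernel-verified Lean document; each statement's English description precedes it below -/
import Mathlib

section
/- Let A : [0,1] → ℝ satisfy max(t, 1−t) ≤ A(t) ≤ 1 for all t ∈ [0,1], let C be the associated bivariate extreme-value copula, and let μ be a probability measure on ℝ² such that μ{(x,y) : x ≤ u and y ≤ v} = C(u,v) for all (u,v) ∈ [0,1]². Then for every t ∈ (0,1), the quantity S(t) = ∫ max(x₁^{1/(1−t)}, x₂^{1/t}) dμ(x₁,x₂) equals A(t)/(1 + A(t)), and consequently A(t) = S(t)/(1 − S(t)). -/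
open MeasureTheory

/-- The bivariate extreme-value copula associated with a Pickands dependence
function `A : [0,1] → ℝ`. -/
noncomputable def evCopula (A : ℝ → ℝ) (u v : ℝ) : ℝ :=
  if u = 0 ∨ v = 0 then 0
  else if u = 1 ∧ v = 1 then 1
  else Real.exp ((Real.log u + Real.log v) * A (Real.log v / (Real.log u + Real.log v)))

/-- if `μ` is a probability measure on `ℝ²` whose c.d.f. on
`[0,1]²` is the extreme-value copula `C`, then for `t ∈ (0,1)`,
`S(t) = ∫ max(x₁^{1/(1−t)}, x₂^{1/t}) dμ = A(t)/(1 + A(t))`, and consequently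
`A(t) = S(t)/(1 − S(t))`. -/
theorem evCopula_S_eq (A : ℝ → ℝ)
    (hA : ∀ t ∈ Set.Icc (0 : ℝ) 1, max t (1 - t) ≤ A t ∧ A t ≤ 1)
    (μ : Measure (ℝ × ℝ)) [IsProbabilityMeasure μ]
    (hμ : ∀ u ∈ Set.Icc (0 : ℝ) 1, ∀ v ∈ Set.Icc (0 : ℝ) 1,
      μ {p : ℝ × ℝ | p.1 ≤ u ∧ p.2 ≤ v} = ENNReal.ofReal (evCopula A u v))
    (t : ℝ) (ht : t ∈ Set.Ioo (0 : ℝ) 1) :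
    (∫ p : ℝ × ℝ, max (p.1 ^ (1 / (1 - t))) (p.2 ^ (1 / t)) ∂μ) = A t / (1 + A t) ∧
      A t = (∫ p : ℝ × ℝ, max (p.1 ^ (1 / (1 - t))) (p.2 ^ (1 / t)) ∂μ) /
        (1 - ∫ p : ℝ × ℝ, max (p.1 ^ (1 / (1 - t))) (p.2 ^ (1 / t)) ∂μ) := by
  obtain ⟨ht0, ht1⟩ := ht
  have ht1' : 0 < 1 - t := by linarith
  set a := A t with ha_def
  have haA := hA t ⟨ht0.le, ht1.le⟩
  have ha0 : 0 < a := lt_of_lt_of_le ht0 (le_trans (le_max_left _ _) haA.1)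
  have h1a : (0 : ℝ) < 1 + a := by linarith
  set f : ℝ × ℝ → ℝ := fun p => max (p.1 ^ (1 / (1 - t))) (p.2 ^ (1 / t)) with hf_def
  -- measurability
  have hc1 : Continuous (fun x : ℝ => x ^ (1 / (1 - t))) :=
    Real.continuous_rpow_const (by positivity)
  have hc2 : Continuous (fun x : ℝ => x ^ (1 / t)) :=
    Real.continuous_rpow_const (by positivity)
  have hf_meas : Measurable f :=
    (hc1.measurable.comp measurable_fst).max (hc2.measurable.comp measurable_snd)
  -- the good set
  set G : Set (ℝ × ℝ) := {p | 0 < p.1 ∧ p.1 ≤ 1 ∧ 0 < p.2 ∧ p.2 ≤ 1} with hG_def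
  have h11 : μ {p : ℝ × ℝ | p.1 ≤ 1 ∧ p.2 ≤ 1} = 1 := by
    rw [hμ 1 ⟨zero_le_one, le_refl 1⟩ 1 ⟨zero_le_one, le_refl 1⟩]
    simp [evCopula]
  have hset11 : MeasurableSet {p : ℝ × ℝ | p.1 ≤ 1 ∧ p.2 ≤ 1} :=
    (measurable_fst measurableSet_Iic).inter (measurable_snd measurableSet_Iic)
  have h01 : μ {p : ℝ × ℝ | p.1 ≤ 0 ∧ p.2 ≤ 1} = 0 := by
    rw [hμ 0 ⟨le_refl 0, zero_le_one⟩ 1 ⟨zero_le_one, le_refl 1⟩]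
    simp [evCopula]
  have h10 : μ {p : ℝ × ℝ | p.1 ≤ 1 ∧ p.2 ≤ 0} = 0 := by
    rw [hμ 1 ⟨zero_le_one, le_refl 1⟩ 0 ⟨le_refl 0, zero_le_one⟩]
    simp [evCopula]
  have hGc : μ Gᶜ = 0 := by
    have hsub : Gᶜ ⊆ {p : ℝ × ℝ | p.1 ≤ 1 ∧ p.2 ≤ 1}ᶜ ∪
        ({p : ℝ × ℝ | p.1 ≤ 0 ∧ p.2 ≤ 1} ∪ {p : ℝ × ℝ | p.1 ≤ 1 ∧ p.2 ≤ 0}) := by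
      intro p hp
      simp only [hG_def, Set.mem_union, Set.mem_compl_iff, Set.mem_setOf_eq, not_and_or,
        not_lt, not_le] at hp ⊢
      rcases le_or_gt p.1 1 with h1 | h1 <;> rcases le_or_gt p.2 1 with h2 | h2 <;> tauto
    refine measure_mono_null hsub ?_
    have hc : μ {p : ℝ × ℝ | p.1 ≤ 1 ∧ p.2 ≤ 1}ᶜ = 0 := by
      rw [measure_compl hset11 (measure_ne_top μ _), h11, measure_univ, tsub_self]
    exact measure_union_null hc (measure_union_null h01 h10)
  have hG_ae : ∀ᵐ p ∂μ, p ∈ G := by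
    rw [ae_iff]
    exact measure_mono_null (fun p hp => hp) hGc
  -- bounds on f over G
  have hf_bounds : ∀ p ∈ G, 0 < f p ∧ f p ≤ 1 := by
    intro p hp
    obtain ⟨hp1, hp1', hp2, hp2'⟩ := hp
    constructor
    · exact lt_max_of_lt_left (Real.rpow_pos_of_pos hp1 _)
    · exact max_le (Real.rpow_le_one hp1.le hp1' (by positivity))
        (Real.rpow_le_one hp2.le hp2' (by positivity))
  have hf_nn : 0 ≤ᵐ[μ] f := hG_ae.mono fun p hp => (hf_bounds p hp).1.le
  have hf_le1 : ∀ᵐ p ∂μ, ‖f p‖ ≤ 1 := hG_ae.mono fun p hp => by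
    rw [Real.norm_eq_abs, abs_of_pos (hf_bounds p hp).1]; exact (hf_bounds p hp).2
  have hf_int : Integrable f μ :=
    (integrable_const (1 : ℝ)).mono' hf_meas.aestronglyMeasurable hf_le1
  -- tail probabilities
  have htail_lt : ∀ s ∈ Set.Ioo (0 : ℝ) 1, μ {p | s < f p} = 1 - ENNReal.ofReal (s ^ a) := by
    intro s hs
    have hs0 := hs.1
    have hs1 := hs.2
    have hlogs : Real.log s < 0 := Real.log_neg hs0 hs1
    have hu_mem : s ^ (1 - t) ∈ Set.Icc (0 : ℝ) 1 :=
      ⟨(Real.rpow_pos_of_pos hs0 _).le, Real.rpow_le_one hs0.le hs1.le ht1'.le⟩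
    have hv_mem : s ^ t ∈ Set.Icc (0 : ℝ) 1 :=
      ⟨(Real.rpow_pos_of_pos hs0 _).le, Real.rpow_le_one hs0.le hs1.le ht0.le⟩
    -- c.d.f. value
    have hcdf : μ {p : ℝ × ℝ | p.1 ≤ s ^ (1 - t) ∧ p.2 ≤ s ^ t} = ENNReal.ofReal (s ^ a) := by
      rw [hμ _ hu_mem _ hv_mem]
      congr 1
      have hu_ne : s ^ (1 - t) ≠ 0 := (Real.rpow_pos_of_pos hs0 _).ne'
      have hv_ne : s ^ t ≠ 0 := (Real.rpow_pos_of_pos hs0 _).ne'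
      have hu_lt1 : s ^ (1 - t) < 1 := Real.rpow_lt_one hs0.le hs1 ht1'
      rw [evCopula, if_neg (by tauto), if_neg (by rintro ⟨h, -⟩; exact hu_lt1.ne h)]
      rw [Real.log_rpow hs0, Real.log_rpow hs0]
      have hsum : (1 - t) * Real.log s + t * Real.log s = Real.log s := by ring
      rw [hsum]
      rw [mul_div_assoc, div_self hlogs.ne, mul_one]
      rw [Real.rpow_def_of_pos hs0]
    -- the event {f ≤ s} coincides a.e. with the rectangle
    have hae : {p : ℝ × ℝ | f p ≤ s} =ᵐ[μ] {p : ℝ × ℝ | p.1 ≤ s ^ (1 - t) ∧ p.2 ≤ s ^ t} := by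
      refine Filter.eventuallyEq_of_mem (hG_ae) fun p hp => ?_
      obtain ⟨hp1, hp1', hp2, hp2'⟩ := hp
      simp only [hf_def, Set.mem_setOf_eq, max_le_iff, eq_iff_iff]
      constructor
      · rintro ⟨h1, h2⟩
        constructor
        · rw [one_div, Real.rpow_inv_le_iff_of_pos hp1.le hs0.le ht1'] at h1; exact h1
        · rw [one_div, Real.rpow_inv_le_iff_of_pos hp2.le hs0.le ht0] at h2; exact h2
      · rintro ⟨h1, h2⟩
        constructor
        · rw [one_div, Real.rpow_inv_le_iff_of_pos hp1.le hs0.le ht1']; exact h1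
        · rw [one_div, Real.rpow_inv_le_iff_of_pos hp2.le hs0.le ht0]; exact h2
    have hle : μ {p : ℝ × ℝ | f p ≤ s} = ENNReal.ofReal (s ^ a) := by
      rw [measure_congr hae, hcdf]
    have hcompl : {p : ℝ × ℝ | s < f p} = {p : ℝ × ℝ | f p ≤ s}ᶜ := by
      ext p; simp [not_le]
    have hms : MeasurableSet {p : ℝ × ℝ | f p ≤ s} := measurableSet_le hf_meas measurable_const
    rw [hcompl, measure_compl hms (measure_ne_top μ _), hle, measure_univ]
  have htail_ge : ∀ s : ℝ, 1 ≤ s → μ {p | s < f p} = 0 := by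
    intro s hs
    refine measure_mono_null (fun p hp => ?_) hGc
    intro hpG
    exact absurd hp (not_lt.2 (le_trans (hf_bounds p hpG).2 hs))
  -- layer cake
  have hlayer : ∫ p, f p ∂μ = ∫ s in Set.Ioi (0 : ℝ), ENNReal.toReal (μ {p | s < f p}) :=
    hf_int.integral_eq_integral_meas_lt hf_nn
  -- compute the tail integral
  have hS : ∫ p, f p ∂μ = a / (1 + a) := by
    rw [hlayer]
    have hcongr : ∫ s in Set.Ioi (0 : ℝ), ENNReal.toReal (μ {p | s < f p}) =
        ∫ s in Set.Ioi (0 : ℝ), Set.indicator (Set.Ioo (0 : ℝ) 1) (fun s => 1 - s ^ a) s := by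
      refine setIntegral_congr_fun measurableSet_Ioi fun s hs => ?_
      rcases lt_or_ge s 1 with hs1 | hs1
      · have hmem : s ∈ Set.Ioo (0 : ℝ) 1 := ⟨hs, hs1⟩
        rw [htail_lt s hmem, Set.indicator_of_mem hmem]
        have hsa1 : s ^ a ≤ 1 := Real.rpow_le_one (le_of_lt hs) hs1.le ha0.le
        rw [ENNReal.toReal_sub_of_le (by simpa using hsa1) (by simp)]
        simp [Real.rpow_nonneg (le_of_lt hs) a]
      · rw [htail_ge s hs1, Set.indicator_of_notMem (fun h => absurd h.2 (not_lt.2 hs1))]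
        simp
    rw [hcongr, integral_indicator measurableSet_Ioo, Measure.restrict_restrict measurableSet_Ioo,
      Set.inter_eq_self_of_subset_left Set.Ioo_subset_Ioi_self]
    have hIoc : ∫ s in Set.Ioo (0 : ℝ) 1, (1 - s ^ a) =
        ∫ s in Set.Ioc (0 : ℝ) 1, (1 - s ^ a) := integral_Ioc_eq_integral_Ioo.symm
    rw [hIoc, ← intervalIntegral.integral_of_le zero_le_one]
    have hint_rpow : IntervalIntegrable (fun s : ℝ => s ^ a) volume 0 1 :=
      intervalIntegral.intervalIntegrable_rpow' (by linarith)
    rw [intervalIntegral.integral_sub intervalIntegrable_const hint_rpow]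
    rw [intervalIntegral.integral_const, integral_rpow (Or.inl (by linarith))]
    rw [Real.one_rpow, Real.zero_rpow (by positivity)]
    rw [smul_eq_mul, mul_one, sub_zero]
    field_simp
    ring
  refine ⟨hS, ?_⟩
  rw [hS]
  have h1 : 1 - a / (1 + a) = 1 / (1 + a) := by field_simp; ring
  rw [h1, one_div, div_inv_eq_mul, div_mul_cancel₀ _ h1a.ne']
end

section
/- Let d ≥ 2, let A be a real-valued function on the unit simplex S_{d−1} = {(t₂,…,t_d) ∈ [0,1]^{d−1} : t₂ + ⋯ + t_d ≤ 1} satisfying max(1 − ∑_{j=2}^{d} t_j, t₂, …, t_d) ≤ A(t) ≤ 1 for all t ∈ S_{d−1}, let C be the associated d-variate extreme-value copula, and let μ be a probability measure on ℝ^d such that μ{x : x_j ≤ u_j for all j = 1,…,d} = C(u) for all u ∈ [0,1]^d. Then for every t = (t₂,…,t_d) in the interior of the simplex (i.e., t_j > 0 for j = 2,…,d and t₁ = 1 − ∑_{j=2}^{d} t_j > 0), the quantity S(t) = ∫ max_{1 ≤ j ≤ d} x_j^{1/t_j} dμ(x) equals A(t)/(1 + A(t)), and consequently A(t) = S(t)/(1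 − S(t)). -/
open MeasureTheory

/-- The `d`-variate extreme-value copula (`d = n + 1 ≥ 2`) associated with a
Pickands dependence function `A` on the unit simplex (encoded as `Fin n → ℝ`). -/
noncomputable def evCopulaD {n : ℕ} (A : (Fin n → ℝ) → ℝ) (u : Fin (n + 1) → ℝ) : ℝ :=
  if ∃ j, u j = 0 then 0
  else if ∀ j, u j = 1 then 1
  else Real.exp ((∑ j, Real.log (u j)) *
    A fun j => Real.log (u j.succ) / ∑ k, Real.log (u k))

/-- if `μ` is a probability measure on `ℝ^d` whose c.d.f. on
`[0,1]^d` is the extreme-value copula `C`, then for `t = (t₂,…,t_d)` in the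
interior of the simplex (with `t₁ = 1 − ∑_{j≥2} t_j > 0`),
`S(t) = ∫ max_j x_j^{1/t_j} dμ = A(t)/(1 + A(t))`, and consequently
`A(t) = S(t)/(1 − S(t))`. -/
theorem evCopulaD_S_eq (n : ℕ) (hn : 1 ≤ n) (A : (Fin n → ℝ) → ℝ)
    (hA : ∀ t : Fin n → ℝ, (∀ j, 0 ≤ t j) → ∑ j, t j ≤ 1 →
      (1 - ∑ j, t j ≤ A t) ∧ (∀ j, t j ≤ A t) ∧ A t ≤ 1)
    (μ : Measure (Fin (n + 1) → ℝ)) [IsProbabilityMeasure μ]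
    (hμ : ∀ u : Fin (n + 1) → ℝ, (∀ j, u j ∈ Set.Icc (0 : ℝ) 1) →
      μ {x | ∀ j, x j ≤ u j} = ENNReal.ofReal (evCopulaD A u))
    (t : Fin n → ℝ) (ht0 : ∀ j, 0 < t j) (ht1 : ∑ j, t j < 1) :
    (∫ x, (⨆ j, x j ^ (1 / (Fin.cons (1 - ∑ i, t i) t : Fin (n + 1) → ℝ) j)) ∂μ) =
        A t / (1 + A t) ∧
      A t =
        (∫ x, (⨆ j, x j ^ (1 / (Fin.cons (1 - ∑ i, t i) t : Fin (n + 1) → ℝ) j)) ∂μ) /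
        (1 - ∫ x, (⨆ j, x j ^ (1 / (Fin.cons (1 - ∑ i, t i) t : Fin (n + 1) → ℝ) j)) ∂μ) := by

  classical
  -- notation
  set T : Fin (n + 1) → ℝ := (Fin.cons (1 - ∑ i, t i) t : Fin (n + 1) → ℝ) with hTdef
  set f : (Fin (n + 1) → ℝ) → ℝ := fun x => ⨆ j, x j ^ (1 / T j) with hfdef
  have hT0 : ∀ j, 0 < T j := by
    intro j
    induction j using Fin.cases with
    | zero => simpa [hTdef] using (by linarith : (0:ℝ) < 1 - ∑ i, t i)
    | succ j => simpa [hTdef] using ht0 j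
  have hTsum : ∑ j, T j = 1 := by
    rw [hTdef, Fin.sum_cons]; ring
  obtain ⟨hA1, hA2, hA3⟩ := hA t (fun j => (ht0 j).le) ht1.le
  have hApos : 0 < A t := lt_of_lt_of_le (by linarith) hA1
  -- measurability of f
  have hfm : Measurable f := by
    have : f = Finset.univ.sup' Finset.univ_nonempty
        (fun (j : Fin (n+1)) (x : Fin (n+1) → ℝ) => x j ^ (1 / T j)) := by
      funext x
      rw [hfdef]
      simp only [Finset.sup'_apply]
      exact (Finset.sup'_univ_eq_ciSup _).symm
    rw [this]
    exact Finset.measurable_sup' _ fun j _ =>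
      ((Real.continuous_rpow_const (one_div_nonneg.2 (hT0 j).le)).measurable).comp
        (measurable_pi_apply j)
  -- the full-cube event has probability one
  have hcube : μ {x : Fin (n+1) → ℝ | ∀ j, x j ≤ 1} = 1 := by
    have := hμ (fun _ => 1) (fun j => ⟨zero_le_one, le_rfl⟩)
    simpa [evCopulaD] using this
  have hle1 : ∀ᵐ x ∂μ, ∀ j, x j ≤ 1 := by
    have hm : MeasurableSet {x : Fin (n+1) → ℝ | ∀ j, x j ≤ 1} := by
      rw [Set.setOf_forall]
      exact MeasurableSet.iInter fun j =>
        measurableSet_le (measurable_pi_apply j) measurable_const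
    rw [ae_iff]
    have : {x : Fin (n+1) → ℝ | ¬ ∀ j, x j ≤ 1}
        = {x : Fin (n+1) → ℝ | ∀ j, x j ≤ 1}ᶜ := rfl
    rw [this, measure_compl hm (measure_ne_top μ _), hcube, measure_univ]
    simp
  have hpos : ∀ᵐ x ∂μ, ∀ j, 0 < x j := by
    rw [ae_all_iff]
    intro j
    rw [ae_iff]
    have hsub : {x : Fin (n+1) → ℝ | ¬ 0 < x j} ⊆
        {x : Fin (n+1) → ℝ | ∀ k, x k ≤ (fun k => if k = j then (0:ℝ) else 1) k}
        ∪ {x : Fin (n+1) → ℝ | ∀ k, x k ≤ 1}ᶜ := by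
      intro x hx
      by_cases hcb : ∀ k, x k ≤ 1
      · left
        intro k
        by_cases hk : k = j
        · subst hk; simp only [if_pos rfl]; exact le_of_not_gt hx
        · simp only [if_neg hk]; exact hcb k
      · right; exact hcb
    refine measure_mono_null hsub (le_antisymm (le_trans (measure_union_le _ _) ?_) bot_le)
    have h1 : μ {x : Fin (n+1) → ℝ | ∀ k, x k ≤ (fun k => if k = j then (0:ℝ) else 1) k} = 0 := by
      rw [hμ _ (fun k => by by_cases hk : k = j <;> simp [hk])]
      have : evCopulaD A (fun k => if k = j then (0:ℝ) else 1) = 0 := by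
        rw [evCopulaD, if_pos ⟨j, by simp⟩]
      simp [this]
    have h2 : μ ({x : Fin (n+1) → ℝ | ∀ k, x k ≤ 1}ᶜ) = 0 := by
      have hm : MeasurableSet {x : Fin (n+1) → ℝ | ∀ k, x k ≤ 1} := by
        rw [Set.setOf_forall]
        exact MeasurableSet.iInter fun k =>
          measurableSet_le (measurable_pi_apply k) measurable_const
      rw [measure_compl hm (measure_ne_top μ _), hcube, measure_univ]
      simp
    rw [h1, h2]; simp
  have hG : ∀ᵐ x ∂μ, (∀ j, 0 < x j) ∧ (∀ j, x j ≤ 1) := hpos.and hle1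
  -- nonnegativity and boundedness of f a.e.
  have hbdd : ∀ x : Fin (n+1) → ℝ, BddAbove (Set.range fun j => x j ^ (1 / T j)) :=
    fun x => Set.Finite.bddAbove (Set.finite_range _)
  have hfnn : ∀ᵐ x ∂μ, 0 ≤ f x := by
    filter_upwards [hG] with x hx
    exact le_trans (Real.rpow_nonneg (hx.1 0).le _) (le_ciSup (hbdd x) 0)
  have hfle1 : ∀ᵐ x ∂μ, f x ≤ 1 := by
    filter_upwards [hG] with x hx
    exact ciSup_le fun j => Real.rpow_le_one (hx.1 j).le (hx.2 j) (one_div_nonneg.2 (hT0 j).le)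
  -- the c.d.f. of f
  have hcdf : ∀ s : ℝ, 0 < s → s < 1 →
      μ {x | f x ≤ s} = ENNReal.ofReal (s ^ A t) := by
    intro s hs hs1
    have hucc : ∀ j, (fun j => s ^ T j) j ∈ Set.Icc (0:ℝ) 1 := fun j =>
      ⟨(Real.rpow_pos_of_pos hs _).le, Real.rpow_le_one hs.le hs1.le (hT0 j).le⟩
    have hlogs : Real.log s ≠ 0 := ne_of_lt (Real.log_neg hs hs1)
    have hev : evCopulaD A (fun j => s ^ T j) = s ^ A t := by
      rw [evCopulaD, if_neg, if_neg]
      · have hlog : ∀ j : Fin (n+1), Real.log (s ^ T j) = T j * Real.log s :=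
          fun j => Real.log_rpow hs _
        have hsumlog : (∑ j, Real.log (s ^ T j)) = Real.log s := by
          simp only [hlog, ← Finset.sum_mul, hTsum, one_mul]
        rw [hsumlog]
        have harg : (fun j : Fin n => Real.log (s ^ T j.succ) / Real.log s) = t := by
          funext j
          rw [hlog, hTdef, Fin.cons_succ, mul_div_assoc, div_self hlogs, mul_one]
        rw [harg, ← Real.rpow_def_of_pos hs]
      · intro hall
        have := hall 0
        exact absurd this (ne_of_lt (Real.rpow_lt_one hs.le hs1 (hT0 0)))
      · rintro ⟨j, hj⟩
        exact absurd hj (ne_of_gt (Real.rpow_pos_of_pos hs _))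
    have hset : {x | f x ≤ s} =ᵐ[μ] {x : Fin (n+1) → ℝ | ∀ j, x j ≤ s ^ T j} := by
      rw [Filter.eventuallyEq_set]
      filter_upwards [hG] with x hx
      simp only [Set.mem_setOf_eq, hfdef]
      rw [ciSup_le_iff (hbdd x)]
      constructor
      · intro h j
        have := h j
        rwa [one_div, Real.rpow_inv_le_iff_of_pos (hx.1 j).le hs.le (hT0 j)] at this
      · intro h j
        rw [one_div, Real.rpow_inv_le_iff_of_pos (hx.1 j).le hs.le (hT0 j)]
        exact h j
    rw [measure_congr hset, hμ _ hucc, hev]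
  have htail : ∀ s : ℝ, 0 < s → s < 1 →
      μ {x | s < f x} = ENNReal.ofReal (1 - s ^ A t) := by
    intro s hs hs1
    have hm : MeasurableSet {x | f x ≤ s} := measurableSet_le hfm measurable_const
    have : {x | s < f x} = {x | f x ≤ s}ᶜ := by
      ext x; simp [not_le]
    rw [this, measure_compl hm (measure_ne_top μ _), measure_univ, hcdf s hs hs1,
      ENNReal.ofReal_sub _ (Real.rpow_pos_of_pos hs _).le, ENNReal.ofReal_one]
  have htail1 : ∀ s : ℝ, 1 ≤ s → μ {x | s < f x} = 0 := by
    intro s hs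
    have hsub : ∀ᵐ x ∂μ, x ∉ {x | s < f x} := by
      filter_upwards [hfle1] with x hx
      simp only [Set.mem_setOf_eq, not_lt]
      exact hx.trans hs
    have : {x | s < f x} = {a | ¬ f a ≤ s} := by ext x; simp [not_le]
    rw [this]
    exact ae_iff.mp (by simpa [not_lt] using hsub)
  -- integrability
  have hfint : Integrable f μ := by
    refine ⟨hfm.aestronglyMeasurable, ?_⟩
    apply HasFiniteIntegral.of_bounded (C := 1)
    filter_upwards [hfnn, hfle1] with x h0 h1
    rw [Real.norm_eq_abs, abs_of_nonneg h0]
    exact h1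
  -- layer cake
  have hlayer : ∫⁻ x, ENNReal.ofReal (f x) ∂μ = ∫⁻ s in Set.Ioi (0:ℝ), μ {x | s < f x} :=
    lintegral_eq_lintegral_meas_lt μ hfnn hfm.aemeasurable
  -- compute the tail integral
  have hIoi1 : ∫⁻ s in Set.Ioi (1:ℝ), μ {x | s < f x} = 0 := by
    rw [setLIntegral_congr_fun measurableSet_Ioi
      (fun s (hs : (1:ℝ) < s) => htail1 s hs.le)]
    simp
  have hsplit : ∫⁻ s in Set.Ioi (0:ℝ), μ {x | s < f x}
      = ∫⁻ s in Set.Ioc (0:ℝ) 1, μ {x | s < f x} := by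
    rw [← Set.Ioc_union_Ioi_eq_Ioi (zero_le_one), lintegral_union measurableSet_Ioi
      Set.Ioc_disjoint_Ioi_same, hIoi1, add_zero]
  have hIoc : ∫⁻ s in Set.Ioc (0:ℝ) 1, μ {x | s < f x}
      = ∫⁻ s in Set.Ioo (0:ℝ) 1, ENNReal.ofReal (1 - s ^ A t) := by
    rw [← setLIntegral_congr Ioo_ae_eq_Ioc]
    exact setLIntegral_congr_fun measurableSet_Ioo
      (fun s hs => htail s hs.1 hs.2)
  have hint1 : IntegrableOn (fun s : ℝ => 1 - s ^ A t) (Set.Ioo 0 1) volume := by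
    have : IntervalIntegrable (fun s : ℝ => 1 - s ^ A t) volume 0 1 := by
      apply IntervalIntegrable.sub intervalIntegrable_const
      exact intervalIntegral.intervalIntegrable_rpow (Or.inl hApos.le)
    have h2 := this.1
    rw [IntegrableOn, Measure.restrict_congr_set Ioo_ae_eq_Ioc]
    simpa [IntegrableOn, Measure.restrict_congr_set] using h2
  have hval : ∫ s in Set.Ioo (0:ℝ) 1, (1 - s ^ A t) = A t / (1 + A t) := by
    rw [setIntegral_congr_set Ioo_ae_eq_Ioc,
      ← intervalIntegral.integral_of_le (zero_le_one' ℝ)]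
    rw [intervalIntegral.integral_sub intervalIntegrable_const]
    · rw [intervalIntegral.integral_const, integral_rpow (Or.inl (by linarith))]
      have h0 : (0:ℝ) ^ (A t + 1) = 0 := Real.zero_rpow (by intro h; linarith)
      rw [Real.one_rpow, h0]
      simp only [smul_eq_mul, mul_one, sub_zero]
      field_simp
      ring
    · exact intervalIntegral.intervalIntegrable_rpow (Or.inl hApos.le)
  have hofReal : ∫⁻ s in Set.Ioo (0:ℝ) 1, ENNReal.ofReal (1 - s ^ A t)
      = ENNReal.ofReal (A t / (1 + A t)) := by
    rw [← ofReal_integral_eq_lintegral_ofReal hint1]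
    · rw [hval]
    · apply (ae_restrict_iff' measurableSet_Ioo).2
      apply Filter.Eventually.of_forall
      intro s hs
      have h1 : s ^ A t ≤ 1 := Real.rpow_le_one hs.1.le hs.2.le hApos.le
      show (0:ℝ) ≤ 1 - s ^ A t
      linarith
  -- put everything together
  have hS : ∫ x, f x ∂μ = A t / (1 + A t) := by
    rw [integral_eq_lintegral_of_nonneg_ae hfnn hfm.aestronglyMeasurable, hlayer,
      hsplit, hIoc, hofReal, ENNReal.toReal_ofReal (by positivity)]
  refine ⟨hS, ?_⟩
  rw [hS]
  have h1A : (0:ℝ) < 1 + A t := by linarith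
  field_simp
  ring
end
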